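/- Let n₁ > 1, k > 0, d > 0 and θ = √(1 - 1/n₁²). Then for each integer j with 1 ≤ j ≤ N where N = ⌊n₁ k d θ / π⌋, the equation tan(y) = -y/√((n₁ k d θ)² - y²) has exactly one solution y in the open interval (π/2 + (j-1)π, π/2 + jπ) ∩ (0, n₁ k d θ). -/
import Mathlib


open Real

/-- Strict monotonicity of `y ↦ y / √(A² - y²)` on `[0, A)`. -/
lemma ratio_strictMono {A u v : ℝ} (hu : 0 ≤ u) (huv : u < v) (hvA : v < A) :
    u / Real.sqrt (A ^ 2 - u ^ 2) < v / Real.sqrt (A ^ 2 - v ^ 2) := by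
  have hv : 0 < v := lt_of_le_of_lt hu huv
  have hAv : 0 < A ^ 2 - v ^ 2 := by nlinarith
  have hAu : 0 < A ^ 2 - u ^ 2 := by nlinarith
  have hsv : 0 < Real.sqrt (A ^ 2 - v ^ 2) := Real.sqrt_pos.mpr hAv
  have hsu : 0 < Real.sqrt (A ^ 2 - u ^ 2) := Real.sqrt_pos.mpr hAu
  have hs : Real.sqrt (A ^ 2 - v ^ 2) ≤ Real.sqrt (A ^ 2 - u ^ 2) := by
    apply Real.sqrt_le_sqrt; nlinarith
  calc u / Real.sqrt (A ^ 2 - u ^ 2) ≤ u / Real.sqrt (A ^ 2 - v ^ 2) :=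
        div_le_div_of_nonneg_left hu hsv hs
      _ < v / Real.sqrt (A ^ 2 - v ^ 2) :=
        div_lt_div_of_pos_right huv hsv

set_option maxHeartbeats 1600000

private lemma aux_sq_pos {x A : ℝ} (h0 : 0 < x) (h : x < A) : 0 < A ^ 2 - x ^ 2 := by
  nlinarith

private lemma aux_hle {J : ℝ} (hJ : π ≤ J) : J ^ 2 - (J - π / 8) ^ 2 ≤ (J - π / 8) ^ 2 := by
  have h0 : (0:ℝ) < π := Real.pi_pos
  have h1 : 0 < J := lt_of_lt_of_le h0 hJ
  have m2 : J * π ≤ J * J := mul_le_mul_of_nonneg_left hJ h1.le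
  nlinarith [sq_nonneg J, sq_nonneg π]

private lemma aux_cast1 {x y : ℝ} (h : x * π / 2 ≤ y * π) : x ≤ 2 * y := by
  have h0 : (0:ℝ) < π := Real.pi_pos
  nlinarith

private lemma aux_cast2 {x y : ℝ} (h : y * π - π / 2 < x * π / 2) : 2 * y - 1 < x := by
  have h0 : (0:ℝ) < π := Real.pi_pos
  nlinarith

/-- Each interval `(π/2+(j-1)π, π/2+jπ)` (intersected with `(0, n₁kdθ)`), for
`1 ≤ j ≤ N = ⌊n₁kdθ/π⌋`, contains exactly one solution of the Pekeris modal equation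
`tan y = -y/√((n₁kdθ)² - y²)`. -/
theorem stmt_0 (n₁ k d θ : ℝ) (hn₁ : 1 < n₁) (hk : 0 < k) (hd : 0 < d)
    (hθ : θ = Real.sqrt (1 - 1 / n₁ ^ 2))
    (N : ℕ) (hN : N = ⌊n₁ * k * d * θ / π⌋₊)
    (j : ℕ) (hj1 : 1 ≤ j) (hjN : j ≤ N) :
    ∃! y : ℝ,
      (π / 2 + ((j : ℝ) - 1) * π < y ∧ y < π / 2 + (j : ℝ) * π ∧
        0 < y ∧ y < n₁ * k * d * θ) ∧
      Real.tan y = - y / Real.sqrt ((n₁ * k * d * θ) ^ 2 - y ^ 2) := by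
  have hπ := Real.pi_pos
  set A := n₁ * k * d * θ with hA_def
  have hn0 : (0:ℝ) < n₁ := lt_trans one_pos hn₁
  have hθpos : 0 < θ := by
    rw [hθ]
    apply Real.sqrt_pos.mpr
    have h1 : 1 / n₁ ^ 2 < 1 := by
      rw [div_lt_one (by positivity)]; nlinarith
    linarith
  have hApos : 0 < A := by rw [hA_def]; positivity
  set J : ℝ := (j : ℝ) * π with hJ_def
  have hj1' : (1:ℝ) ≤ (j:ℝ) := by exact_mod_cast hj1
  have hJpi : π ≤ J := by
    rw [hJ_def]; exact (le_mul_iff_one_le_left hπ).mpr hj1'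
  have hjA : J ≤ A := by
    have h0 : (j:ℝ) ≤ A / π := by
      have hjf : j ≤ ⌊A / π⌋₊ := hN ▸ hjN
      exact (Nat.le_floor_iff (by positivity)).mp hjf
    calc J = (j:ℝ) * π := hJ_def
      _ ≤ (A/π) * π := mul_le_mul_of_nonneg_right h0 hπ.le
      _ = A := by field_simp
  set c : ℝ := J - π/8 with hc_def
  have hcpos : 0 < c := by rw [hc_def]; linarith
  have hcA : c < A := by rw [hc_def]; linarith
  have hAc : 0 < A^2 - c^2 := aux_sq_pos hcpos hcA
  have hsc : 0 < Real.sqrt (A^2 - c^2) := Real.sqrt_pos.mpr hAc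
  set M : ℝ := c / Real.sqrt (A^2 - c^2) with hM_def
  have hM0 : 0 ≤ M := div_nonneg hcpos.le (Real.sqrt_nonneg _)
  set y₀ : ℝ := J - Real.arctan (M + 1) with hy₀_def
  have harc2 : Real.arctan (M + 1) < π/2 := Real.arctan_lt_pi_div_two _
  have harc1 : π/4 ≤ Real.arctan (M + 1) := by
    rw [← Real.arctan_one]
    exact (Real.arctan_strictMono.monotone (by linarith))
  have hy₀a : J - π/2 < y₀ := by rw [hy₀_def]; linarith
  have hy₀c : y₀ < c := by rw [hy₀_def, hc_def]; linarith
  have hy₀pos : 0 < y₀ := by linarith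
  have hy₀A : y₀ < A := by linarith
  have hAy₀ : 0 < A^2 - y₀^2 := aux_sq_pos hy₀pos hy₀A
  have hsy₀ : 0 < Real.sqrt (A^2 - y₀^2) := Real.sqrt_pos.mpr hAy₀
  have hty₀ : Real.tan y₀ = -(M + 1) := by
    rw [hy₀_def, hJ_def]
    rw [Real.tan_nat_mul_pi_sub, Real.tan_arctan]
  have hry₀ : y₀ / Real.sqrt (A^2 - y₀^2) ≤ M := by
    rw [hM_def]
    apply div_le_div₀ hcpos.le hy₀c.le hsc
    apply Real.sqrt_le_sqrt
    have h2 : y₀^2 ≤ c^2 := pow_le_pow_left₀ hy₀pos.le hy₀c.le 2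
    linarith
  have hhy₀ : Real.tan y₀ + y₀ / Real.sqrt (A^2 - y₀^2) < 0 := by
    rw [hty₀]; linarith
  -- choose y₁
  obtain ⟨y₁, hy₁c, hy₁J, hy₁A, hhy₁⟩ :
      ∃ y₁ : ℝ, c ≤ y₁ ∧ y₁ ≤ J ∧ y₁ < A ∧
        0 < Real.tan y₁ + y₁ / Real.sqrt (A^2 - y₁^2) := by
    rcases eq_or_lt_of_le hjA with heq | hlt
    · refine ⟨c, le_refl _, by rw [hc_def]; linarith, hcA, ?_⟩
      have htc : Real.tan c = -Real.tan (π/8) := by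
        rw [hc_def, hJ_def]; exact Real.tan_nat_mul_pi_sub _ _
      have ht8 : Real.tan (π/8) < 1 := by
        rw [← Real.tan_pi_div_four]
        exact Real.tan_lt_tan_of_nonneg_of_lt_pi_div_two (by positivity)
          (by linarith) (by linarith)
      have hle : A^2 - c^2 ≤ c^2 := by
        have hA' : A = J := heq.symm
        rw [hA', hc_def]; exact aux_hle hJpi
      have hsle : Real.sqrt (A^2 - c^2) ≤ c := by
        calc Real.sqrt (A^2 - c^2) ≤ Real.sqrt (c^2) := Real.sqrt_le_sqrt hle
          _ = c := Real.sqrt_sq hcpos.le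
      have hr1 : 1 ≤ c / Real.sqrt (A^2 - c^2) := (one_le_div hsc).mpr hsle
      rw [htc]; linarith
    · refine ⟨J, by rw [hc_def]; linarith, le_refl _, hlt, ?_⟩
      have htJ : Real.tan J = 0 := by rw [hJ_def]; exact Real.tan_nat_mul_pi j
      have hAJ : 0 < A^2 - J^2 := aux_sq_pos (lt_of_lt_of_le hπ hJpi) hlt
      have hrJ : 0 < J / Real.sqrt (A^2 - J^2) :=
        div_pos (by linarith) (Real.sqrt_pos.mpr hAJ)
      rw [htJ]; linarith
  have hy₀y₁ : y₀ < y₁ := lt_of_lt_of_le hy₀c hy₁c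
  -- continuity
  have hcont : ContinuousOn (fun y => Real.tan y + y / Real.sqrt (A^2 - y^2))
      (Set.Icc y₀ y₁) := by
    apply ContinuousOn.add
    · intro x hx
      apply (Real.continuousAt_tan.mpr ?_).continuousWithinAt
      intro hcos
      obtain ⟨m, hm⟩ := Real.cos_eq_zero_iff.mp hcos
      have hx1 : J - π/2 < x := lt_of_lt_of_le hy₀a hx.1
      have hx2 : x ≤ J := le_trans hx.2 hy₁J
      rw [hm, hJ_def] at hx1 hx2
      have e1 : ((2*(m:ℤ)+1 : ℤ) : ℝ) ≤ 2 * ((j:ℤ) : ℝ) := by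
        push_cast
        push_cast at hx2
        exact aux_cast1 hx2
      have e2 : 2 * ((j:ℤ) : ℝ) - 1 < ((2*(m:ℤ)+1 : ℤ) : ℝ) := by
        push_cast
        push_cast at hx1
        exact aux_cast2 hx1
      have e1' : (2*(m:ℤ)+1 : ℤ) ≤ 2*(j:ℤ) := by exact_mod_cast e1
      have e2' : (2*(j:ℤ) : ℤ) - 1 < 2*(m:ℤ)+1 := by exact_mod_cast e2
      omega
    · apply ContinuousOn.div continuousOn_id
      · exact (Real.continuous_sqrt.comp (by continuity)).continuousOn
      · intro x hx
        have h1 : 0 < x := lt_of_lt_of_le hy₀pos hx.1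
        have h2 : x < A := lt_of_le_of_lt hx.2 hy₁A
        exact ne_of_gt (Real.sqrt_pos.mpr (aux_sq_pos h1 h2))
  -- IVT
  obtain ⟨y, hyIoo, hy⟩ := intermediate_value_Ioo hy₀y₁.le hcont
    (Set.mem_Ioo.mpr ⟨hhy₀, hhy₁⟩)
  have hya : J - π/2 < y := lt_trans hy₀a hyIoo.1
  have hyJ : y < J := lt_of_lt_of_le hyIoo.2 hy₁J
  have hyA : y < A := lt_of_lt_of_le hyIoo.2 hy₁A.le
  have hypos : 0 < y := lt_trans hy₀pos hyIoo.1
  have hyeq : Real.tan y = -y / Real.sqrt (A^2 - y^2) := by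
    rw [neg_div]
    simp only at hy
    linarith
  have hlb : π/2 + ((j:ℝ)-1)*π = J - π/2 := by rw [hJ_def]; ring
  have hub : π/2 + (j:ℝ)*π = J + π/2 := by rw [hJ_def]; ring
  -- uniqueness helper: any solution is < J
  have solP : ∀ w : ℝ, π/2 + ((j:ℝ)-1)*π < w → w < π/2 + (j:ℝ)*π → 0 < w → w < A →
      Real.tan w = -w / Real.sqrt (A^2 - w^2) → w < J ∧ Real.tan w < 0 := by
    intro w h1 h2 h3 h4 h5
    rw [hlb] at h1
    rw [hub] at h2
    have hAw : 0 < A^2 - w^2 := aux_sq_pos h3 h4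
    have hsw : 0 < Real.sqrt (A^2 - w^2) := Real.sqrt_pos.mpr hAw
    have htneg : Real.tan w < 0 := by
      rw [h5, neg_div]
      exact neg_lt_zero.mpr (div_pos h3 hsw)
    refine ⟨?_, htneg⟩
    by_contra hge
    push_neg at hge
    have h6 : Real.tan (w - (j:ℝ) * π) = Real.tan w :=
      Real.tan_periodic.sub_nat_mul_eq j
    have h7 : 0 ≤ Real.tan (w - (j:ℝ) * π) := by
      apply Real.tan_nonneg_of_nonneg_of_le_pi_div_two
      · rw [← hJ_def]; linarith
      · rw [← hJ_def]; linarith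
    linarith [h6 ▸ h7]
  have huniq : ∀ u v : ℝ,
      (π/2 + ((j:ℝ)-1)*π < u ∧ u < π/2 + (j:ℝ)*π ∧ 0 < u ∧ u < A) →
      Real.tan u = -u / Real.sqrt (A^2 - u^2) →
      (π/2 + ((j:ℝ)-1)*π < v ∧ v < π/2 + (j:ℝ)*π ∧ 0 < v ∧ v < A) →
      Real.tan v = -v / Real.sqrt (A^2 - v^2) →
      u < v → False := by
    intro u v ⟨hu1, hu2, hu3, hu4⟩ hue ⟨hv1, hv2, hv3, hv4⟩ hve huv
    obtain ⟨huJ, -⟩ := solP u hu1 hu2 hu3 hu4 hue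
    obtain ⟨hvJ, -⟩ := solP v hv1 hv2 hv3 hv4 hve
    rw [hlb] at hu1 hv1
    -- tan strictly increasing on the interval
    have htan : Real.tan u < Real.tan v := by
      have e1 : Real.tan (u - (j:ℝ) * π) = Real.tan u :=
        Real.tan_periodic.sub_nat_mul_eq j
      have e2 : Real.tan (v - (j:ℝ) * π) = Real.tan v :=
        Real.tan_periodic.sub_nat_mul_eq j
      rw [← e1, ← e2]
      exact Real.strictMonoOn_tan (Set.mem_Ioo.mpr ⟨by linarith, by linarith⟩)
        (Set.mem_Ioo.mpr ⟨by linarith, by linarith⟩) (by linarith)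
    have hrat : u / Real.sqrt (A^2 - u^2) < v / Real.sqrt (A^2 - v^2) :=
      ratio_strictMono hu3.le huv hv4
    rw [hue, hve, neg_div, neg_div] at htan
    linarith
  refine ⟨y, ⟨⟨by rw [hlb]; exact hya, by rw [hub]; linarith, hypos, hyA⟩, hyeq⟩, ?_⟩
  rintro z ⟨⟨hz1, hz2, hz3, hz4⟩, hz5⟩
  have hyP : π/2 + ((j:ℝ)-1)*π < y ∧ y < π/2 + (j:ℝ)*π ∧ 0 < y ∧ y < A :=
    ⟨by rw [hlb]; exact hya, by rw [hub]; linarith, hypos, hyA⟩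
  rcases lt_trichotomy z y with h | h | h
  · exact absurd (huniq z y ⟨hz1, hz2, hz3, hz4⟩ hz5 hyP hyeq h) (fun t => t)
  · exact h
  · exact absurd (huniq y z hyP hyeq ⟨hz1, hz2, hz3, hz4⟩ hz5 h) (fun t => t)
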